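/- Let a > 0, let ε_1, ε_2, … be i.i.d. random variables uniform on {−1, +1}, and for each nonnegative integer z set S_z = Σ_{i=1}^{z} ε_i and g(z) = E[exp(a·S_z²)]. Then for every nonnegative integer z, g(z+2) + g(z) ≥ 2·g(z+1); consequently, the piecewise linear interpolation of z ↦ g(z) on [1, ∞) is a convex function. -/

import Mathlib

open Finset

lemma rad_step (n : ℕ) (f : ℝ → ℝ) :
    ∑ ε : Fin (n+1) → Bool, f (∑ i, (if ε i then (1:ℝ) else -1)) =
    ∑ ε : Fin n → Bool, (f ((∑ i, (if ε i then (1:ℝ) else -1)) + 1) +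
      f ((∑ i, (if ε i then (1:ℝ) else -1)) - 1)) := by
  rw [← (Fin.consEquiv (fun _ : Fin (n+1) => Bool)).sum_comp
    (fun ε => f (∑ i, (if ε i then (1:ℝ) else -1)))]
  rw [Fintype.sum_prod_type, Fintype.sum_bool]
  rw [← Finset.sum_add_distrib]
  refine Finset.sum_congr rfl fun ε _ => ?_
  simp only [Fin.consEquiv_apply, Fin.sum_univ_succ, Fin.cons_zero, Fin.cons_succ]
  norm_num
  ring_nf

lemma rad_poly (x p : ℝ) (hx : 1 ≤ x) (hp : 0 < p) :
    4*x*(p^3+p) ≤ x^4*(p^4+1) + 6*p^2 := by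
  have h1 : 0 ≤ x^4*(p-1)^4 := by positivity
  have h2 : 0 ≤ 4*(x^4 - x)*(p*(p-1)^2) := by
    have hxx : x ≤ x^4 := by nlinarith [sq_nonneg x, sq_nonneg (x-1), sq_nonneg (x+1)]
    have : 0 ≤ p*(p-1)^2 := by positivity
    nlinarith
  have h3 : 0 ≤ 2*p^2*((x-1)^2*(x^2+2*x+3)) := by positivity
  nlinarith [h1, h2, h3]

lemma rad_key (a s : ℝ) (ha : 0 < a) :
    4*(Real.exp (a*(s+1)^2) + Real.exp (a*(s-1)^2)) ≤
      Real.exp (a*(s+2)^2) + 2*Real.exp (a*s^2) + Real.exp (a*(s-2)^2)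
        + 4*Real.exp (a*s^2) := by
  set c := Real.exp (a*s^2) with hc
  set x := Real.exp a with hxd
  set p := Real.exp (2*a*s) with hpd
  have hcp : 0 < c := Real.exp_pos _
  have hpp : 0 < p := Real.exp_pos _
  have hx1 : 1 ≤ x := Real.one_le_exp_iff.mpr ha.le
  have e1 : Real.exp (a*(s+1)^2) = c * x * p := by
    rw [show a*(s+1)^2 = a*s^2 + a + 2*a*s by ring, Real.exp_add, Real.exp_add]
  have e2 : Real.exp (a*(s-1)^2) * p = c * x := by
    rw [hc, hxd, hpd, ← Real.exp_add, ← Real.exp_add]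
    congr 1; ring
  have hx4 : x^4 = Real.exp (4*a) := by
    rw [hxd, ← Real.exp_nat_mul]; norm_num
  have hp2 : p^2 = Real.exp (4*a*s) := by
    rw [hpd, ← Real.exp_nat_mul]; congr 1; push_cast; ring
  have e3 : Real.exp (a*(s+2)^2) = c * x^4 * p^2 := by
    rw [hc, hx4, hp2, ← Real.exp_add, ← Real.exp_add]
    congr 1; ring
  have e4 : Real.exp (a*(s-2)^2) * p^2 = c * x^4 := by
    rw [hc, hx4, hp2, ← Real.exp_add, ← Real.exp_add]
    congr 1; ring
  have hE1 : 0 < Real.exp (a*(s-1)^2) := Real.exp_pos _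
  have hE2 : 0 < Real.exp (a*(s-2)^2) := Real.exp_pos _
  have key := rad_poly x p hx1 hpp
  rw [← mul_le_mul_iff_of_pos_right (show (0:ℝ) < p^2 by positivity)]
  rw [e1, e3]
  nlinarith [mul_le_mul_of_nonneg_left key hcp.le, e2, e4, mul_pos hcp hpp,
    mul_pos hE1 hpp, sq_nonneg p]

/-- `g(z) = E[exp(a S_z²)]` where `S_z` is a sum of `z` independent Rademacher signs:
the average of `exp(a (Σ_i ε_i)²)` over all `2^z` sign vectors `ε ∈ {±1}^z`. -/
noncomputable def radMGF (a : ℝ) (z : ℕ) : ℝ :=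
  ((2 : ℝ) ^ z)⁻¹ *
    ∑ ε : Fin z → Bool, Real.exp (a * (∑ i, (if ε i then (1 : ℝ) else -1)) ^ 2)

lemma rad_discrete (a : ℝ) (ha : 0 < a) (z : ℕ) :
    2 * radMGF a (z + 1) ≤ radMGF a (z + 2) + radMGF a z := by
  have h1 : (∑ ε : Fin (z+1) → Bool,
      Real.exp (a * (∑ i, (if ε i then (1:ℝ) else -1))^2)) =
      ∑ ε : Fin z → Bool,
        (Real.exp (a * ((∑ i, (if ε i then (1:ℝ) else -1)) + 1)^2) +
         Real.exp (a * ((∑ i, (if ε i then (1:ℝ) else -1)) - 1)^2)) :=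
    rad_step z (fun t => Real.exp (a * t^2))
  have h2 : (∑ ε : Fin (z+2) → Bool,
      Real.exp (a * (∑ i, (if ε i then (1:ℝ) else -1))^2)) =
      ∑ ε : Fin z → Bool,
        ((Real.exp (a * (((∑ i, (if ε i then (1:ℝ) else -1)) + 1) + 1)^2) +
          Real.exp (a * (((∑ i, (if ε i then (1:ℝ) else -1)) + 1) - 1)^2)) +
         (Real.exp (a * (((∑ i, (if ε i then (1:ℝ) else -1)) - 1) + 1)^2) +
          Real.exp (a * (((∑ i, (if ε i then (1:ℝ) else -1)) - 1) - 1)^2))) := by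
    rw [rad_step (z+1) (fun t => Real.exp (a * t^2))]
    exact rad_step z (fun t => Real.exp (a * (t+1)^2) + Real.exp (a * (t-1)^2))
  have hsum : 4 * (∑ ε : Fin z → Bool,
        (Real.exp (a * ((∑ i, (if ε i then (1:ℝ) else -1)) + 1)^2) +
         Real.exp (a * ((∑ i, (if ε i then (1:ℝ) else -1)) - 1)^2))) ≤
      (∑ ε : Fin z → Bool,
        ((Real.exp (a * (((∑ i, (if ε i then (1:ℝ) else -1)) + 1) + 1)^2) +
          Real.exp (a * (((∑ i, (if ε i then (1:ℝ) else -1)) + 1) - 1)^2)) +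
         (Real.exp (a * (((∑ i, (if ε i then (1:ℝ) else -1)) - 1) + 1)^2) +
          Real.exp (a * (((∑ i, (if ε i then (1:ℝ) else -1)) - 1) - 1)^2)))) +
      4 * ∑ ε : Fin z → Bool,
        Real.exp (a * (∑ i, (if ε i then (1:ℝ) else -1))^2) := by
    rw [Finset.mul_sum, Finset.mul_sum, ← Finset.sum_add_distrib]
    refine Finset.sum_le_sum fun ε _ => ?_
    have := rad_key a (∑ i, (if ε i then (1:ℝ) else -1)) ha
    ring_nf at this ⊢
    linarith
  unfold radMGF
  rw [h1, h2]
  have hz : (0:ℝ) < 2^z := by positivity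
  rw [show ((2:ℝ)^(z+1))⁻¹ = (2^z)⁻¹ / 2 by rw [pow_succ]; field_simp,
      show ((2:ℝ)^(z+2))⁻¹ = (2^z)⁻¹ / 4 by rw [pow_succ, pow_succ]; field_simp; ring]
  have hzi : (0:ℝ) < (2^z)⁻¹ := by positivity
  set A := (∑ ε : Fin z → Bool,
        (Real.exp (a * ((∑ i, (if ε i then (1:ℝ) else -1)) + 1)^2) +
         Real.exp (a * ((∑ i, (if ε i then (1:ℝ) else -1)) - 1)^2)))
  set B := (∑ ε : Fin z → Bool,
        ((Real.exp (a * (((∑ i, (if ε i then (1:ℝ) else -1)) + 1) + 1)^2) +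
          Real.exp (a * (((∑ i, (if ε i then (1:ℝ) else -1)) + 1) - 1)^2)) +
         (Real.exp (a * (((∑ i, (if ε i then (1:ℝ) else -1)) - 1) + 1)^2) +
          Real.exp (a * (((∑ i, (if ε i then (1:ℝ) else -1)) - 1) - 1)^2))))
  set C := ∑ ε : Fin z → Bool,
        Real.exp (a * (∑ i, (if ε i then (1:ℝ) else -1))^2)
  nlinarith [hsum, hzi]

lemma d_mono (g : ℕ → ℝ) (hg : ∀ z : ℕ, 2 * g (z + 1) ≤ g (z + 2) + g z) :
    Monotone (fun n => g (n+1) - g n) := by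
  apply monotone_nat_of_le_succ
  intro n
  have := hg n
  show g (n+1) - g n ≤ g (n+1+1) - g (n+1)
  linarith

lemma g_lower (g : ℕ → ℝ) (hg : ∀ z : ℕ, 2 * g (z + 1) ≤ g (z + 2) + g z)
    (n : ℕ) : ∀ m : ℕ, n ≤ m → g n + ((m:ℝ) - n) * (g (n+1) - g n) ≤ g m := by
  intro m hm
  induction m, hm using Nat.le_induction with
  | base => simp
  | succ m hm ih =>
    have hd : g (n+1) - g n ≤ g (m+1) - g m := d_mono g hg hm
    push_cast
    linarith

lemma g_upper (g : ℕ → ℝ) (hg : ∀ z : ℕ, 2 * g (z + 1) ≤ g (z + 2) + g z)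
    (n : ℕ) : ∀ m : ℕ, n + 1 ≤ m →
      g m ≤ g (n+1) + ((m:ℝ) - n - 1) * (g (m+1) - g m) := by
  intro m hm
  induction m, hm using Nat.le_induction with
  | base => simp
  | succ m hm ih =>
    have hd : g (m+1) - g m ≤ g (m+2) - g (m+1) := d_mono g hg (Nat.le_succ m)
    have hmn : (n:ℝ) + 1 ≤ m := by exact_mod_cast hm
    push_cast
    nlinarith [ih]

noncomputable def interp (g : ℕ → ℝ) (x : ℝ) : ℝ :=
  g ⌊x⌋₊ + (x - ⌊x⌋₊) * (g (⌊x⌋₊ + 1) - g ⌊x⌋₊)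

lemma interp_L1 (g : ℕ → ℝ) (hg : ∀ z : ℕ, 2 * g (z + 1) ≤ g (z + 2) + g z)
    (x y : ℝ) (hx : 0 ≤ x) (hxy : x ≤ y) :
    interp g y - interp g x ≤ (y - x) * (g (⌊y⌋₊ + 1) - g ⌊y⌋₊) := by
  set n := ⌊x⌋₊ with hn
  set m := ⌊y⌋₊ with hm
  have hy : 0 ≤ y := hx.trans hxy
  have hnm : n ≤ m := Nat.floor_mono hxy
  have hxl : (n:ℝ) ≤ x := Nat.floor_le hx
  have hxu : x < (n:ℝ) + 1 := Nat.lt_floor_add_one x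
  have hyl : (m:ℝ) ≤ y := Nat.floor_le hy
  have hyu : y < (m:ℝ) + 1 := Nat.lt_floor_add_one y
  have hd : g (n+1) - g n ≤ g (m+1) - g m := d_mono g hg hnm
  unfold interp
  rw [← hn, ← hm]
  rcases eq_or_lt_of_le hnm with h | h
  · rw [← h]; ring_nf; rfl
  · have hnm1 : n + 1 ≤ m := h
    have hup := g_upper g hg n m hnm1
    have hmn1 : (n:ℝ) + 1 ≤ m := by exact_mod_cast hnm1
    nlinarith [mul_le_mul_of_nonneg_left hd (show (0:ℝ) ≤ (n:ℝ) + 1 - x by linarith)]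

lemma interp_L2 (g : ℕ → ℝ) (hg : ∀ z : ℕ, 2 * g (z + 1) ≤ g (z + 2) + g z)
    (x y : ℝ) (hx : 0 ≤ x) (hxy : x ≤ y) :
    (y - x) * (g (⌊x⌋₊ + 1) - g ⌊x⌋₊) ≤ interp g y - interp g x := by
  set n := ⌊x⌋₊ with hn
  set m := ⌊y⌋₊ with hm
  have hy : 0 ≤ y := hx.trans hxy
  have hnm : n ≤ m := Nat.floor_mono hxy
  have hxl : (n:ℝ) ≤ x := Nat.floor_le hx
  have hxu : x < (n:ℝ) + 1 := Nat.lt_floor_add_one x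
  have hyl : (m:ℝ) ≤ y := Nat.floor_le hy
  have hyu : y < (m:ℝ) + 1 := Nat.lt_floor_add_one y
  have hd : g (n+1) - g n ≤ g (m+1) - g m := d_mono g hg hnm
  have hlo := g_lower g hg n m hnm
  have hmn : (n:ℝ) ≤ m := by exact_mod_cast hnm
  unfold interp
  rw [← hn, ← hm]
  nlinarith [mul_le_mul_of_nonneg_left hd (show (0:ℝ) ≤ y - m by linarith)]

lemma interp_convex (g : ℕ → ℝ) (hg : ∀ z : ℕ, 2 * g (z + 1) ≤ g (z + 2) + g z) :
    ConvexOn ℝ (Set.Ici (1 : ℝ)) (fun x : ℝ =>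
      g ⌊x⌋₊ + (x - ⌊x⌋₊) * (g (⌊x⌋₊ + 1) - g ⌊x⌋₊)) := by
  have : ConvexOn ℝ (Set.Ici (1 : ℝ)) (interp g) := by
    apply convexOn_of_slope_mono_adjacent (convex_Ici 1)
    intro x y z hx hz hxy hyz
    have hx0 : (0:ℝ) ≤ x := le_trans zero_le_one hx
    have hy0 : (0:ℝ) ≤ y := hx0.trans hxy.le
    have h1 := interp_L1 g hg x y hx0 hxy.le
    have h2 := interp_L2 g hg y z hy0 hyz.le
    have hxy' : 0 < y - x := by linarith
    have hyz' : 0 < z - y := by linarith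
    rw [div_le_div_iff₀ hxy' hyz']
    nlinarith [mul_le_mul_of_nonneg_right h1 hyz'.le,
      mul_le_mul_of_nonneg_right h2 hxy'.le]
  exact this

/-- **Discrete convexity of the Rademacher exponential moment.**  For `a > 0` and
`g(z) = E[exp(a S_z²)]`, one has `g(z+2) + g(z) ≥ 2 g(z+1)` for every `z ≥ 0`;
consequently the piecewise linear interpolation of `g` is convex on `[1, ∞)`. -/
theorem radMGF_convex (a : ℝ) (ha : 0 < a) :
    (∀ z : ℕ, 2 * radMGF a (z + 1) ≤ radMGF a (z + 2) + radMGF a z) ∧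
    ConvexOn ℝ (Set.Ici (1 : ℝ))
      (fun x : ℝ =>
        radMGF a ⌊x⌋₊ + (x - ⌊x⌋₊) * (radMGF a (⌊x⌋₊ + 1) - radMGF a ⌊x⌋₊)) := by
  exact ⟨rad_discrete a ha, interp_convex (radMGF a) (rad_discrete a ha)⟩
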